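/- Let G and G' be connected weighted graphs on the same vertex set {1,…,n}, n ≥ 2, with adjacency matrices A and A' and diagonal degree matrices D and D' (all degrees positive). If A D^{-1} = A' D'^{-1}, i.e. the two graphs have the same random walk transition matrix, then there exists a constant c > 0 such that A' = c·A. -/

import Mathlib

open Matrix BigOperators

/-- Connectivity of the weighted graph with adjacency matrix `A`: the simple graph with an
edge `{u,v}` whenever `A u v > 0` is connected. -/
def AdjConnected {n : ℕ} (A : Matrix (Fin n) (Fin n) ℝ) : Prop :=
  (SimpleGraph.fromRel fun u v => 0 < A u v).Connected

/-- If two connected weighted graphs on the same vertex set (with all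
weighted degrees positive) have the same random walk transition matrix `A D⁻¹`, then
their adjacency matrices agree up to a positive uniform scaling. -/
theorem stmt18 {n : ℕ} (hn : 2 ≤ n) (A A' : Matrix (Fin n) (Fin n) ℝ)
    (hsymm : A.IsSymm) (hnonneg : ∀ u v, 0 ≤ A u v) (hdiag : ∀ u, A u u = 0)
    (hconn : AdjConnected A) (hdeg : ∀ u, 0 < ∑ v, A u v)
    (hsymm' : A'.IsSymm) (hnonneg' : ∀ u v, 0 ≤ A' u v) (hdiag' : ∀ u, A' u u = 0)
    (hconn' : AdjConnected A') (hdeg' : ∀ u, 0 < ∑ v, A' u v)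
    (hwalk : A * Matrix.diagonal (fun u => (∑ v, A u v)⁻¹)
           = A' * Matrix.diagonal (fun u => (∑ v, A' u v)⁻¹)) :
    ∃ c : ℝ, 0 < c ∧ A' = c • A := by
  set d : Fin n → ℝ := fun u => ∑ v, A u v with hd
  set d' : Fin n → ℝ := fun u => ∑ v, A' u v with hd'
  have hdpos : ∀ u, 0 < d u := hdeg
  have hdpos' : ∀ u, 0 < d' u := hdeg'
  have hAsymm : ∀ u v, A u v = A v u := fun u v => congrFun (congrFun hsymm v) u
  have hAsymm' : ∀ u v, A' u v = A' v u := fun u v => congrFun (congrFun hsymm' v) u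
  have key : ∀ u v, A u v * (d v)⁻¹ = A' u v * (d' v)⁻¹ := by
    intro u v
    have := congrFun (congrFun hwalk u) v
    simpa [Matrix.mul_diagonal] using this
  set r : Fin n → ℝ := fun u => d' u / d u with hr
  have hA' : ∀ u v, A' u v = A u v * r v := by
    intro u v
    have h := key u v
    field_simp [hr, (hdpos v).ne', (hdpos' v).ne'] at h ⊢
    show A' u v = A u v * (d' v / d v)
    rw [mul_div_assoc', eq_div_iff (hdpos v).ne']
    linarith
  -- r is constant on edges of A
  have hedge : ∀ u v, 0 < A u v → r u = r v := by
    intro u v huv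
    have h1 := hA' u v
    have h2 := hA' v u
    rw [hAsymm' u v, hAsymm u v] at h1
    rw [h1] at h2
    exact (mul_left_cancel₀ (by rw [← hAsymm u v]; exact huv.ne') h2).symm
  have hadj : ∀ u v, (SimpleGraph.fromRel fun a b => 0 < A a b).Adj u v → r u = r v := by
    intro u v h
    rcases h.2 with h' | h'
    · exact hedge u v h'
    · exact (hedge v u h').symm
  have hconst : ∀ u v, r u = r v := by
    intro u v
    obtain ⟨p⟩ := hconn.preconnected u v
    induction p with
    | nil => rfl
    | cons h _ ih => exact (hadj _ _ h).trans ih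
  have hne : Nonempty (Fin n) := ⟨⟨0, by omega⟩⟩
  obtain ⟨u0⟩ := hne
  refine ⟨r u0, div_pos (hdpos' u0) (hdpos u0), ?_⟩
  ext u v
  rw [Matrix.smul_apply, hA' u v, hconst u0 v, smul_eq_mul, mul_comm]
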